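/- Let R be a commutative ℚ-algebra with elements τ, φ, φ′, φ″, C, and let D : R → R be a derivation with Dτ = 1, Dφ = φ′, Dφ′ = φ″, DC = 0; set φ‴ := Dφ″. Let E be the 4×4 matrix over R with rows (0,0,0,0), (1,0,0,0), (0,−(5+φ‴),0,0), (0,0,−1,0); E is the matrix, in the ordered basis ([X°],[H],−[L],[p]), of the small quantum product with [H], defined R-bilinearly by [H]∗[X°] = [H], [H]∗[H] = (5+φ‴)[L], [H]∗[L] = [p], [H]∗[p] = 0. Then each of the four column vectors v₁ = (1, −τ, −((5/2)τ² + 25/12 + τφ″ − φ′), −(5/6)τ³ − (25/12)τ + C − τφ′ + 2φ), v₂ = (0, 1, 5τ + 11/2 + φ″, (5/2)τ² + (11/2)τ − 25/12 + φ′), v₃ = (0, 0, 1, τ), v₄ = (0, 0, 0, 1) satisfies D v + E · v = 0 (with D applied entrywise). -/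

import Mathlib

open Matrix

private lemma derivation_map_ofNat_aux {R : Type*} [CommRing R] [Algebra ℚ R]
    (D : Derivation ℚ R R) (n : ℕ) [n.AtLeastTwo] :
    D (OfNat.ofNat n : R) = 0 := by
  rw [← Nat.cast_ofNat]; exact D.map_natCast _

/-- With `D` a derivation modelling `d/dτ` (`Dτ = 1, Dφ = φ', Dφ' = φ'',
DC = 0`, `φ''' := Dφ''`) and `E` the matrix of the small quantum product `[H]∗` in the
basis `([X°],[H],−[L],[p])` (rows `(0,0,0,0),(1,0,0,0),(0,−(5+φ'''),0,0),(0,0,−1,0)`),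
each of the coordinate vectors `v₁,…,v₄` of the quantum-deformed classes
`[X°]_𝒬, [H]_𝒬, −[L]_𝒬, [p]_𝒬` satisfies the quantum differential equation
`Dv + E·v = 0`. -/
theorem stmt5 (R : Type*) [CommRing R] [Algebra ℚ R]
    (D : Derivation ℚ R R) (τ φ φ' φ'' C : R)
    (hτ : D τ = 1) (hφ : D φ = φ') (hφ' : D φ' = φ'') (hC : D C = 0)
    (E : Matrix (Fin 4) (Fin 4) R)
    (hE : E = !![0, 0, 0, 0; 1, 0, 0, 0; 0, -(5 + D φ''), 0, 0; 0, 0, -1, 0])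
    (v₁ v₂ v₃ v₄ : Fin 4 → R)
    (hv₁ : v₁ = ![1, -τ,
        -((5/2 : ℚ) • τ^2 + algebraMap ℚ R (25/12) + τ * φ'' - φ'),
        -((5/6 : ℚ) • τ^3) - (25/12 : ℚ) • τ + C - τ * φ' + 2 * φ])
    (hv₂ : v₂ = ![0, 1, 5 * τ + algebraMap ℚ R (11/2) + φ'',
        (5/2 : ℚ) • τ^2 + (11/2 : ℚ) • τ - algebraMap ℚ R (25/12) + φ'])
    (hv₃ : v₃ = ![0, 0, 1, τ])
    (hv₄ : v₄ = ![0, 0, 0, 1]) :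
    (fun i => D (v₁ i)) + E.mulVec v₁ = 0 ∧
    (fun i => D (v₂ i)) + E.mulVec v₂ = 0 ∧
    (fun i => D (v₃ i)) + E.mulVec v₃ = 0 ∧
    (fun i => D (v₄ i)) + E.mulVec v₄ = 0 := by
  have h2 : D (2:R) = 0 := by
    rw [show (2:R) = ((2:ℕ):R) by norm_num]; exact D.map_natCast 2
  have h5 : D (5:R) = 0 := by
    rw [show (5:R) = ((5:ℕ):R) by norm_num]; exact D.map_natCast 5
  have ha1 : algebraMap ℚ R (5/2) * 2 = 5 := by
    rw [show (2:R) = algebraMap ℚ R 2 from (map_ofNat _ 2).symm, ← _root_.map_mul]; norm_num; exact map_ofNat _ 5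
  have ha2 : algebraMap ℚ R (5/6) * 3 = algebraMap ℚ R (5/2) := by
    rw [show (3:R) = algebraMap ℚ R 3 from (map_ofNat _ 3).symm, ← _root_.map_mul]; norm_num
  subst hE hv₁ hv₂ hv₃ hv₄
  refine ⟨?_, ?_, ?_, ?_⟩ <;> funext i <;> fin_cases i <;>
    simp [mulVec, dotProduct, Fin.sum_univ_succ, hτ, hφ, hφ', hC, Derivation.leibniz,
      h2, h5, Algebra.algebraMap_eq_smul_one] <;>
    (try simp only [Algebra.smul_def]) <;>
      (first
        | rfl
        | ring1
        | linear_combination (τ : R) * ha1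
        | linear_combination (-τ : R) * ha1
        | linear_combination (τ^2 : R) * ha2
        | linear_combination (-(τ^2) : R) * ha2)
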